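/- Let 0 < D < c. Then for every α ≤ 0: D·log(1 + exp(α)) + c·log(1 + exp(−α)) − (D·log(1 + c/D) + c·log(1 + D/c)) ≥ (c − D)² / (2·(D + c)). That is, for the logistic loss, whenever the rejector output has the wrong sign (rejects although D < c), the excess conditional surrogate risk is at least (D + c)/2 times the squared normalized margin ((c − D)/(D + c))². -/

import Mathlib

open Real Set

private lemma hasDerivAt_F (x : ℝ) (h1 : -1 < x) (h2 : x < 1) :
    HasDerivAt (fun y : ℝ => Real.log (1 + y) - Real.log (1 - y) - 2 * y)
      (1 / (1 + x) + 1 / (1 - x) - 2) x := by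
  have hp : (0:ℝ) < 1 + x := by linarith
  have hq : (0:ℝ) < 1 - x := by linarith
  have d1 : HasDerivAt (fun y : ℝ => Real.log (1 + y)) (1 / (1 + x)) x := by
    have : HasDerivAt (fun y : ℝ => 1 + y) 1 x := (hasDerivAt_id x).const_add 1
    simpa using this.log hp.ne'
  have d2 : HasDerivAt (fun y : ℝ => Real.log (1 - y)) ((-1) / (1 - x)) x := by
    have : HasDerivAt (fun y : ℝ => 1 - y) (-1) x := (hasDerivAt_id x).const_sub 1
    simpa using this.log hq.ne'
  have d3 : HasDerivAt (fun y : ℝ => 2 * y) 2 x := by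
    simpa using (hasDerivAt_id x).const_mul 2
  have := (d1.sub d2).sub d3
  refine this.congr_deriv ?_
  ring

private lemma two_mul_le_log_sub_log {u : ℝ} (h0 : 0 ≤ u) (h1 : u < 1) :
    2 * u ≤ Real.log (1 + u) - Real.log (1 - u) := by
  set F : ℝ → ℝ := fun y => Real.log (1 + y) - Real.log (1 - y) - 2 * y with hF
  have hmem : ∀ x ∈ Icc (0:ℝ) u, -1 < x ∧ x < 1 := fun x hx =>
    ⟨by linarith [hx.1], by linarith [hx.2]⟩
  have mono : MonotoneOn F (Icc 0 u) := by
    apply monotoneOn_of_deriv_nonneg (convex_Icc 0 u)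
    · intro x hx
      obtain ⟨a, b⟩ := hmem x hx
      exact (hasDerivAt_F x a b).continuousAt.continuousWithinAt
    · intro x hx
      rw [interior_Icc] at hx
      obtain ⟨a, b⟩ := hmem x ⟨hx.1.le, hx.2.le⟩
      exact (hasDerivAt_F x a b).differentiableAt.differentiableWithinAt
    · intro x hx
      rw [interior_Icc] at hx
      obtain ⟨a, b⟩ := hmem x ⟨hx.1.le, hx.2.le⟩
      rw [(hasDerivAt_F x a b).deriv]
      have hp : (0:ℝ) < 1 + x := by linarith
      have hq : (0:ℝ) < 1 - x := by linarith
      have h2 : 1 / (1 + x) + 1 / (1 - x) - 2 = 2 * x ^ 2 / ((1 + x) * (1 - x)) := by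
        field_simp; ring
      rw [h2]
      positivity
  have h00 : F 0 = 0 := by simp [hF]
  have := mono (left_mem_Icc.mpr h0) (right_mem_Icc.mpr h0) h0
  rw [h00] at this
  simpa [hF] using this

private lemma hasDerivAt_G (x : ℝ) (h1 : -1 < x) (h2 : x < 1) :
    HasDerivAt (fun y : ℝ => (1 + y) * Real.log (1 + y) + (1 - y) * Real.log (1 - y) - y ^ 2)
      (Real.log (1 + x) - Real.log (1 - x) - 2 * x) x := by
  have hp : (0:ℝ) < 1 + x := by linarith
  have hq : (0:ℝ) < 1 - x := by linarith
  have e1 : HasDerivAt (fun y : ℝ => 1 + y) 1 x := (hasDerivAt_id x).const_add 1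
  have e2 : HasDerivAt (fun y : ℝ => 1 - y) (-1) x := (hasDerivAt_id x).const_sub 1
  have d1 : HasDerivAt (fun y : ℝ => (1 + y) * Real.log (1 + y))
      (1 * Real.log (1 + x) + (1 + x) * (1 / (1 + x))) x := by
    exact e1.mul (by simpa using e1.log hp.ne')
  have d2 : HasDerivAt (fun y : ℝ => (1 - y) * Real.log (1 - y))
      ((-1) * Real.log (1 - x) + (1 - x) * ((-1) / (1 - x))) x := by
    exact e2.mul (by simpa using e2.log hq.ne')
  have d3 : HasDerivAt (fun y : ℝ => y ^ 2) (2 * x) x := by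
    simpa using (hasDerivAt_pow 2 x)
  have := (d1.add d2).sub d3
  refine this.congr_deriv ?_
  rw [mul_one_div_cancel hp.ne', mul_div_assoc', mul_neg_one, neg_div, div_self hq.ne']
  ring

private lemma sq_le_entropy {u : ℝ} (h0 : 0 ≤ u) (h1 : u < 1) :
    u ^ 2 ≤ (1 + u) * Real.log (1 + u) + (1 - u) * Real.log (1 - u) := by
  set G : ℝ → ℝ := fun y => (1 + y) * Real.log (1 + y) + (1 - y) * Real.log (1 - y) - y ^ 2
    with hG
  have hmem : ∀ x ∈ Icc (0:ℝ) u, -1 < x ∧ x < 1 := fun x hx =>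
    ⟨by linarith [hx.1], by linarith [hx.2]⟩
  have mono : MonotoneOn G (Icc 0 u) := by
    apply monotoneOn_of_deriv_nonneg (convex_Icc 0 u)
    · intro x hx
      obtain ⟨a, b⟩ := hmem x hx
      exact (hasDerivAt_G x a b).continuousAt.continuousWithinAt
    · intro x hx
      rw [interior_Icc] at hx
      obtain ⟨a, b⟩ := hmem x ⟨hx.1.le, hx.2.le⟩
      exact (hasDerivAt_G x a b).differentiableAt.differentiableWithinAt
    · intro x hx
      rw [interior_Icc] at hx
      obtain ⟨a, b⟩ := hmem x ⟨hx.1.le, hx.2.le⟩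
      rw [(hasDerivAt_G x a b).deriv, ← sub_nonneg]
      have := two_mul_le_log_sub_log (u := x) hx.1.le b
      linarith
  have h00 : G 0 = 0 := by simp [hG]
  have := mono (left_mem_Icc.mpr h0) (right_mem_Icc.mpr h0) h0
  rw [h00] at this
  have : (0:ℝ) ≤ (1 + u) * Real.log (1 + u) + (1 - u) * Real.log (1 - u) - u ^ 2 := this
  linarith

theorem logistic_wrong_sign_excess_risk (D c : ℝ) (hD : 0 < D) (hDc : D < c) :
    ∀ α : ℝ, α ≤ 0 →
      (c - D) ^ 2 / (2 * (D + c)) ≤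
        D * Real.log (1 + Real.exp α) + c * Real.log (1 + Real.exp (-α)) -
          (D * Real.log (1 + c / D) + c * Real.log (1 + D / c)) := by
  intro α hα
  have hc : 0 < c := hD.trans hDc
  have hs : 0 < D + c := by linarith
  -- Step A : value at α is at least value at 0, i.e. (D+c) log 2
  have hxpos : 0 < Real.exp α := Real.exp_pos α
  have hx1 : Real.exp α ≤ 1 := Real.exp_le_one_iff.mpr hα
  have hy1 : 1 ≤ Real.exp (-α) := Real.one_le_exp (by linarith)
  have hA : (D + c) * Real.log 2 ≤
      D * Real.log (1 + Real.exp α) + c * Real.log (1 + Real.exp (-α)) := by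
    have hlog2 : Real.log 2 ≤ Real.log (1 + Real.exp (-α)) := by
      apply Real.log_le_log (by norm_num)
      linarith
    have hprod : Real.log (1 + Real.exp α) + Real.log (1 + Real.exp (-α))
        = Real.log ((1 + Real.exp α) * (1 + Real.exp (-α))) := by
      rw [Real.log_mul (by positivity) (by positivity)]
    have hamgm : (4:ℝ) ≤ (1 + Real.exp α) * (1 + Real.exp (-α)) := by
      have h1 : Real.exp α * Real.exp (-α) = 1 := by
        rw [← Real.exp_add]; simp
      have h2 : 2 ≤ Real.exp α + Real.exp (-α) := by
        nlinarith [sq_nonneg (Real.exp α - Real.exp (-α))]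
      nlinarith
    have hlog4 : 2 * Real.log 2 ≤ Real.log ((1 + Real.exp α) * (1 + Real.exp (-α))) := by
      have : Real.log 4 ≤ Real.log ((1 + Real.exp α) * (1 + Real.exp (-α))) :=
        Real.log_le_log (by norm_num) hamgm
      have h4 : Real.log 4 = 2 * Real.log 2 := by
        rw [show (4:ℝ) = 2 ^ 2 by norm_num, Real.log_pow]; push_cast; ring
      linarith
    have key : 2 * D * Real.log 2 + (c - D) * Real.log 2 ≤
        D * (Real.log (1 + Real.exp α) + Real.log (1 + Real.exp (-α)))
          + (c - D) * Real.log (1 + Real.exp (-α)) := by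
      have t1 : 2 * D * Real.log 2 ≤
          D * (Real.log (1 + Real.exp α) + Real.log (1 + Real.exp (-α))) := by
        rw [hprod]
        nlinarith
      have t2 : (c - D) * Real.log 2 ≤ (c - D) * Real.log (1 + Real.exp (-α)) := by
        apply mul_le_mul_of_nonneg_left hlog2 (by linarith)
      linarith
    nlinarith [key]
  -- Step B : Pinsker-type bound at α = 0
  set u : ℝ := (c - D) / (D + c) with hu
  have hu0 : 0 ≤ u := by
    apply div_nonneg <;> linarith
  have hu1 : u < 1 := by
    rw [hu, div_lt_one hs]; linarith
  have hkey := sq_le_entropy hu0 hu1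
  have h1u : 1 + u = 2 * c / (D + c) := by rw [hu]; field_simp; ring
  have h2u : 1 - u = 2 * D / (D + c) := by rw [hu]; field_simp; ring
  have hlc : Real.log (2 * c / (D + c)) = Real.log 2 + Real.log c - Real.log (D + c) := by
    rw [Real.log_div (by positivity) hs.ne', Real.log_mul (by norm_num) hc.ne']
  have hlD : Real.log (2 * D / (D + c)) = Real.log 2 + Real.log D - Real.log (D + c) := by
    rw [Real.log_div (by positivity) hs.ne', Real.log_mul (by norm_num) hD.ne']
  rw [h1u, h2u, hlc, hlD] at hkey
  -- rewrite the minimizer value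
  have hg1 : Real.log (1 + c / D) = Real.log (D + c) - Real.log D := by
    rw [show 1 + c / D = (D + c) / D by field_simp, Real.log_div hs.ne' hD.ne']
  have hg2 : Real.log (1 + D / c) = Real.log (D + c) - Real.log c := by
    rw [show 1 + D / c = (D + c) / c by field_simp; ring, Real.log_div hs.ne' hc.ne']
  rw [hg1, hg2]
  -- combine
  have husq : u ^ 2 * (D + c) = (c - D) ^ 2 / (D + c) := by
    rw [hu]; field_simp
  have hB : (c - D) ^ 2 / (2 * (D + c)) ≤
      (D + c) * Real.log 2 - (D * (Real.log (D + c) - Real.log D)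
        + c * (Real.log (D + c) - Real.log c)) := by
    have hmul := mul_le_mul_of_nonneg_right hkey (le_of_lt hs)
    rw [add_mul] at hmul
    have e1 : 2 * c / (D + c) * (Real.log 2 + Real.log c - Real.log (D + c)) * (D + c)
        = 2 * c * (Real.log 2 + Real.log c - Real.log (D + c)) := by
      field_simp
    have e2 : 2 * D / (D + c) * (Real.log 2 + Real.log D - Real.log (D + c)) * (D + c)
        = 2 * D * (Real.log 2 + Real.log D - Real.log (D + c)) := by
      field_simp
    rw [e1, e2, husq] at hmul
    have : (c - D) ^ 2 / (2 * (D + c)) = ((c - D) ^ 2 / (D + c)) / 2 := by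
      rw [div_div, mul_comm]
    rw [this]
    linarith
  linarith
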